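/- Let p be a prime, n ≥ 1, and let f : ℤ_p → ℤ_p be an n-unit delay mapping. For each k ≥ 2 let F_k : ℤ/p^{n·k}ℤ → ℤ/p^{n·(k−1)}ℤ be the map induced by f, i.e. F_k(x mod p^{n·k}) = f(x) mod p^{n·(k−1)} (this is well defined by the n-unit delay property). Then f preserves the normalized Haar measure μ_p on ℤ_p if and only if for every k ≥ 2 and every point x ∈ ℤ/p^{n·(k−1)}ℤ, the number #F_k^{−1}(x) of F_k-preimages of x equals p^n. -/

import Mathlib

open MeasureTheory

/-- A function `f : ℤ_[p] → ℤ_[p]` is an *`n`-unit delay* mapping if for all `a, b ∈ ℤ_[p]`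
and all `k ≥ 1`, `a ≡ b (mod p^(n+k))` implies `f a ≡ f b (mod p^k)`. -/
def IsNUnitDelay (p : ℕ) [Fact p.Prime] (n : ℕ) (f : PadicInt p → PadicInt p) : Prop :=
  ∀ k : ℕ, 1 ≤ k → ∀ a b : PadicInt p,
    (p : PadicInt p) ^ (n + k) ∣ a - b → (p : PadicInt p) ^ k ∣ f a - f b

section MyAux

variable {p : ℕ} [Fact p.Prime]


lemma myaux_toZModPow_eq_iff (m : ℕ) (a b : PadicInt p) :
    PadicInt.toZModPow m a = PadicInt.toZModPow m b ↔ (p : PadicInt p) ^ m ∣ a - b := by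
  rw [← sub_eq_zero, ← map_sub, ← RingHom.mem_ker, PadicInt.ker_toZModPow,
    Ideal.mem_span_singleton]

lemma myaux_isOpen_fiber (m : ℕ) (y : ZMod (p ^ m)) :
    IsOpen ((PadicInt.toZModPow m) ⁻¹' {y} : Set (PadicInt p)) := by
  rw [Metric.isOpen_iff]
  intro x hx
  refine ⟨(p : ℝ) ^ (-m : ℤ), zpow_pos (by exact_mod_cast (Fact.out : p.Prime).pos) _, fun z hz => ?_⟩
  rw [Metric.mem_ball, dist_eq_norm] at hz
  have hd : (p : PadicInt p) ^ m ∣ z - x :=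
    Ideal.mem_span_singleton.1 ((PadicInt.norm_le_pow_iff_mem_span_pow _ _).1 hz.le)
  have := (myaux_toZModPow_eq_iff m z x).2 hd
  simp only [Set.mem_preimage, Set.mem_singleton_iff] at hx ⊢
  rw [this, hx]

lemma myaux_measure_preimage_eq [MeasurableSpace (PadicInt p)]
    (μ : Measure (PadicInt p)) (N : ℕ) [NeZero N] (g : PadicInt p → ZMod N)
    (hg : ∀ y, MeasurableSet (g ⁻¹' {y})) (v : ENNReal) (hv : ∀ y, μ (g ⁻¹' {y}) = v)
    (S : Set (ZMod N)) : μ (g ⁻¹' S) = (Nat.card S) * v := by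
  classical
  have h1 : g ⁻¹' S = ⋃ y ∈ S.toFinset, g ⁻¹' {y} := by ext x; simp
  rw [h1, measure_biUnion_finset ?_ fun y _ => hg y]
  · simp only [hv, Finset.sum_const, nsmul_eq_mul]
    congr 2
    rw [Nat.card_coe_set_eq, Set.ncard_eq_toFinset_card']
  · intro a _ b _ hab
    refine Set.disjoint_left.mpr fun x hxa hxb => hab ?_
    simp only [Set.mem_preimage, Set.mem_singleton_iff] at hxa hxb
    rw [← hxa, ← hxb]

lemma myaux_fiber_measure [MeasurableSpace (PadicInt p)] [BorelSpace (PadicInt p)]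
    (μ : Measure (PadicInt p)) [μ.IsAddHaarMeasure] [IsProbabilityMeasure μ]
    (m : ℕ) (y : ZMod (p ^ m)) :
    μ ((PadicInt.toZModPow m) ⁻¹' {y}) = ((p : ENNReal) ^ m)⁻¹ := by
  haveI : NeZero (p ^ m) := ⟨pow_ne_zero m (Fact.out : p.Prime).ne_zero⟩
  have hmeas : ∀ y : ZMod (p^m),
      MeasurableSet ((PadicInt.toZModPow m) ⁻¹' {y} : Set (PadicInt p)) :=
    fun y => (myaux_isOpen_fiber m y).measurableSet
  have htrans : ∀ y : ZMod (p^m), μ ((PadicInt.toZModPow m) ⁻¹' {y}) =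
      μ ((PadicInt.toZModPow m) ⁻¹' {0}) := by
    intro y
    set c : PadicInt p := ((y.val : ℕ) : PadicInt p) with hcdef
    have hc : PadicInt.toZModPow m c = y := by
      rw [hcdef, map_natCast]
      exact ZMod.natCast_rightInverse y
    have hpre : (fun x => c + x) ⁻¹' ((PadicInt.toZModPow m) ⁻¹' {y})
        = (PadicInt.toZModPow m) ⁻¹' {0} := by
      ext x
      simp [Set.mem_preimage, map_add, hc, add_eq_left]
    rw [← measure_preimage_add μ c _, hpre]
  have hsum := myaux_measure_preimage_eq μ (p^m) (PadicInt.toZModPow m) hmeas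
      (μ ((PadicInt.toZModPow m) ⁻¹' {0})) htrans Set.univ
  rw [Set.preimage_univ, measure_univ, Nat.card_univ, Nat.card_eq_fintype_card, ZMod.card] at hsum
  rw [htrans y]
  have hne : ((p : ENNReal) ^ m) ≠ 0 :=
    pow_ne_zero m (by exact_mod_cast (Fact.out : p.Prime).ne_zero)
  have hnt : ((p : ENNReal) ^ m) ≠ ⊤ := ENNReal.pow_ne_top (ENNReal.natCast_ne_top p)
  have hcast : ((p ^ m : ℕ) : ENNReal) = (p : ENNReal) ^ m := by push_cast; ring
  rw [hcast] at hsum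
  calc μ ((PadicInt.toZModPow m) ⁻¹' {0})
      = ((p : ENNReal) ^ m)⁻¹ * ((p : ENNReal) ^ m * μ ((PadicInt.toZModPow m) ⁻¹' {0})) := by
        rw [← mul_assoc, ENNReal.inv_mul_cancel hne hnt, one_mul]
    _ = ((p : ENNReal) ^ m)⁻¹ := by rw [← hsum, mul_one]

lemma myaux_continuous (n : ℕ) (f : PadicInt p → PadicInt p) (hdelay : IsNUnitDelay p n f) :
    Continuous f := by
  rw [Metric.continuous_iff]
  intro b ε hε
  obtain ⟨k, hk⟩ := PadicInt.exists_pow_neg_lt p hε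
  refine ⟨(p : ℝ) ^ (-(n + (k + 1) : ℕ) : ℤ),
    zpow_pos (by exact_mod_cast (Fact.out : p.Prime).pos) _, fun a ha => ?_⟩
  rw [dist_eq_norm] at ha ⊢
  have hdvd : (p : PadicInt p) ^ (n + (k + 1)) ∣ a - b :=
    Ideal.mem_span_singleton.1 ((PadicInt.norm_le_pow_iff_mem_span_pow _ _).1 ha.le)
  have hout : (p : PadicInt p) ^ (k + 1) ∣ f a - f b :=
    hdelay (k + 1) (Nat.le_add_left 1 k) a b hdvd
  have h1 : ‖f a - f b‖ ≤ (p : ℝ) ^ (-(k + 1 : ℕ) : ℤ) :=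
    (PadicInt.norm_le_pow_iff_mem_span_pow _ _).2 (Ideal.mem_span_singleton.2 hout)
  have hp1 : (1 : ℝ) ≤ (p : ℝ) := by exact_mod_cast (Fact.out : p.Prime).one_le
  calc ‖f a - f b‖ ≤ (p : ℝ) ^ (-(k + 1 : ℕ) : ℤ) := h1
    _ ≤ (p : ℝ) ^ (-(k : ℕ) : ℤ) := zpow_le_zpow_right₀ hp1 (by push_cast; omega)
    _ < ε := hk

lemma myaux_generateFrom [MeasurableSpace (PadicInt p)] [BorelSpace (PadicInt p)] :
    (inferInstance : MeasurableSpace (PadicInt p)) =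
      MeasurableSpace.generateFrom {s : Set (PadicInt p) |
        ∃ m : ℕ, ∃ y : ZMod (p ^ m), s = (PadicInt.toZModPow m) ⁻¹' {y}} := by
  apply le_antisymm
  · rw [BorelSpace.measurable_eq (α := PadicInt p)]
    refine MeasurableSpace.generateFrom_le fun U hU => ?_
    have hrep : U = ⋃ m : ℕ, ⋃ y : ZMod (p ^ m),
        ⋃ (_ : ((PadicInt.toZModPow m) ⁻¹' {y} : Set (PadicInt p)) ⊆ U),
          ((PadicInt.toZModPow m) ⁻¹' {y} : Set (PadicInt p)) := by
      apply Set.Subset.antisymm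
      · intro x hx
        obtain ⟨ε, hε, hball⟩ := Metric.isOpen_iff.1 (by exact hU) x hx
        obtain ⟨m, hm⟩ := PadicInt.exists_pow_neg_lt p hε
        have hsub : ((PadicInt.toZModPow m) ⁻¹' {PadicInt.toZModPow m x} : Set (PadicInt p))
            ⊆ U := by
          intro z hz
          apply hball
          rw [Metric.mem_ball, dist_eq_norm]
          calc ‖z - x‖ ≤ (p : ℝ) ^ (-(m : ℕ) : ℤ) :=
              (PadicInt.norm_le_pow_iff_mem_span_pow _ _).2 (Ideal.mem_span_singleton.2
                ((myaux_toZModPow_eq_iff m z x).1 hz))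
            _ < ε := hm
        exact Set.mem_iUnion.2 ⟨m, Set.mem_iUnion.2 ⟨PadicInt.toZModPow m x,
          Set.mem_iUnion.2 ⟨hsub, rfl⟩⟩⟩
      · exact Set.iUnion_subset fun m => Set.iUnion_subset fun y => Set.iUnion_subset fun h => h
    rw [hrep]
    refine MeasurableSet.iUnion fun m => ?_
    haveI : NeZero (p ^ m) := ⟨pow_ne_zero m (Fact.out : p.Prime).ne_zero⟩
    exact MeasurableSet.iUnion fun y => MeasurableSet.iUnion fun _ =>
      MeasurableSpace.measurableSet_generateFrom ⟨m, y, rfl⟩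
  · exact MeasurableSpace.generateFrom_le (by
      rintro s ⟨m, y, rfl⟩
      exact (myaux_isOpen_fiber m y).measurableSet)

lemma myaux_piSystem : IsPiSystem {s : Set (PadicInt p) |
    ∃ m : ℕ, ∃ y : ZMod (p ^ m), s = (PadicInt.toZModPow m) ⁻¹' {y}} := by
  have key : ∀ (m m' : ℕ) (y : ZMod (p ^ m)) (y' : ZMod (p ^ m')), m ≤ m' →
      ∀ x : PadicInt p, PadicInt.toZModPow m x = y → PadicInt.toZModPow m' x = y' →
      ((PadicInt.toZModPow m) ⁻¹' {y} : Set (PadicInt p)) ∩ (PadicInt.toZModPow m') ⁻¹' {y'}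
        = (PadicInt.toZModPow m') ⁻¹' {y'} := by
    intro m m' y y' hmm' x hx hx'
    apply Set.inter_eq_self_of_subset_right
    intro z hz
    simp only [Set.mem_preimage, Set.mem_singleton_iff] at hz ⊢
    have h1 : (p : PadicInt p) ^ m' ∣ z - x := (myaux_toZModPow_eq_iff m' z x).1 (by rw [hz, hx'])
    have h2 : (p : PadicInt p) ^ m ∣ z - x := (pow_dvd_pow _ hmm').trans h1
    rw [(myaux_toZModPow_eq_iff m z x).2 h2, hx]
  rintro s ⟨m, y, rfl⟩ t ⟨m', y', rfl⟩ hne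
  obtain ⟨x, hx, hx'⟩ := hne
  simp only [Set.mem_preimage, Set.mem_singleton_iff] at hx hx'
  rcases le_total m m' with h | h
  · rw [key m m' y y' h x hx hx']; exact ⟨m', y', rfl⟩
  · rw [Set.inter_comm, key m' m y' y h x hx' hx]; exact ⟨m, y, rfl⟩

lemma myaux_mul_inv (j t : ℕ) :
    ((p : ENNReal) ^ t) * (((p : ENNReal)) ^ (j + t))⁻¹ = ((p : ENNReal) ^ j)⁻¹ := by
  have hne : ∀ s : ℕ, ((p : ENNReal) ^ s) ≠ 0 :=
    fun s => pow_ne_zero s (by exact_mod_cast (Fact.out : p.Prime).ne_zero)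
  have hnt : ∀ s : ℕ, ((p : ENNReal) ^ s) ≠ ⊤ := fun s => ENNReal.pow_ne_top (ENNReal.natCast_ne_top p)
  rw [pow_add, ENNReal.mul_inv (Or.inl (hne j)) (Or.inr (hne t)), ← mul_assoc, mul_comm ((p:ENNReal)^t),
    mul_assoc, ENNReal.mul_inv_cancel (hne t) (hnt t), mul_one]

lemma myaux_card_eq (j t M : ℕ) (hM : M = j + t) (c : ℕ)
    (h : (c : ENNReal) * (((p : ENNReal)) ^ M)⁻¹ = ((p : ENNReal) ^ j)⁻¹) : c = p ^ t := by
  subst hM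
  have hne : ∀ s : ℕ, ((p : ENNReal) ^ s) ≠ 0 :=
    fun s => pow_ne_zero s (by exact_mod_cast (Fact.out : p.Prime).ne_zero)
  have hnt : ∀ s : ℕ, ((p : ENNReal) ^ s) ≠ ⊤ := fun s => ENNReal.pow_ne_top (ENNReal.natCast_ne_top p)
  have h2 : (c : ENNReal) = (p : ENNReal) ^ t := by
    have := congrArg (· * ((p : ENNReal)) ^ (j + t)) h
    rwa [mul_assoc, ENNReal.inv_mul_cancel (hne _) (hnt _), mul_one,
      pow_add, ← mul_assoc, ENNReal.inv_mul_cancel (hne j) (hnt j), one_mul] at this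
  have : (c : ENNReal) = ((p ^ t : ℕ) : ENNReal) := by rw [h2]; push_cast; ring
  exact_mod_cast this


end MyAux

/-- **Criterion of measure-preservation.** Let `f : ℤ_[p] → ℤ_[p]` be an `n`-unit delay
mapping and, for `k ≥ 2`, let `F k : ℤ/p^(n·k)ℤ → ℤ/p^(n·(k-1))ℤ` be the reduction of `f`,
i.e. the (well-defined) map with `F k (x mod p^(n·k)) = f x mod p^(n·(k-1))`. Then `f`
preserves the normalized Haar measure `μ` on `ℤ_[p]` if and only if for every `k ≥ 2`, every
point `y ∈ ℤ/p^(n·(k-1))ℤ` has exactly `p ^ n` preimages under `F k`. -/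
theorem nUnitDelay_measurePreserving_iff_card_preimage (p : ℕ) [Fact p.Prime] (n : ℕ)
    (hn : 1 ≤ n) [MeasurableSpace (PadicInt p)] [BorelSpace (PadicInt p)]
    (μ : Measure (PadicInt p)) [μ.IsAddHaarMeasure] [IsProbabilityMeasure μ]
    (f : PadicInt p → PadicInt p) (hdelay : IsNUnitDelay p n f)
    (F : ∀ k : ℕ, ZMod (p ^ (n * k)) → ZMod (p ^ (n * (k - 1))))
    (hF : ∀ k : ℕ, 2 ≤ k → ∀ x : PadicInt p,
      F k (PadicInt.toZModPow (n * k) x) = PadicInt.toZModPow (n * (k - 1)) (f x)) :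
    MeasurePreserving f μ μ ↔
      ∀ k : ℕ, 2 ≤ k → ∀ y : ZMod (p ^ (n * (k - 1))),
        Nat.card ((F k) ⁻¹' {y}) = p ^ n := by
  have hpne : p ≠ 0 := (Fact.out : p.Prime).ne_zero
  have hNZ : ∀ m : ℕ, NeZero (p ^ m) := fun m => ⟨pow_ne_zero m hpne⟩
  have hfibmeas : ∀ (m : ℕ) (y : ZMod (p ^ m)),
      MeasurableSet ((PadicInt.toZModPow m) ⁻¹' {y} : Set (PadicInt p)) :=
    fun m y => (myaux_isOpen_fiber m y).measurableSet
  have hpreim : ∀ k, 2 ≤ k → ∀ y : ZMod (p ^ (n * (k - 1))),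
      f ⁻¹' ((PadicInt.toZModPow (n * (k - 1))) ⁻¹' {y})
        = (PadicInt.toZModPow (n * k)) ⁻¹' ((F k) ⁻¹' {y}) := by
    intro k hk y
    ext x
    simp only [Set.mem_preimage, Set.mem_singleton_iff, hF k hk x]
  have hmulkey : ∀ k, 2 ≤ k → n * k = n * (k - 1) + n := by
    intro k hk
    have h1 : k - 1 + 1 = k := by omega
    calc n * k = n * (k - 1 + 1) := by rw [h1]
      _ = n * (k - 1) + n := by ring
  constructor
  · intro hmp k hk y
    haveI := hNZ (n * k)
    have h1 : μ (f ⁻¹' ((PadicInt.toZModPow (n * (k - 1))) ⁻¹' {y}))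
        = ((p : ENNReal) ^ (n * (k - 1)))⁻¹ := by
      rw [hmp.measure_preimage (hfibmeas _ y).nullMeasurableSet, myaux_fiber_measure]
    rw [hpreim k hk y, myaux_measure_preimage_eq μ (p ^ (n * k)) (PadicInt.toZModPow (n * k))
      (hfibmeas _) (((p : ENNReal) ^ (n * k))⁻¹) (fun y' => myaux_fiber_measure μ _ y')
      ((F k) ⁻¹' {y})] at h1
    exact myaux_card_eq (n * (k - 1)) n (n * k) (hmulkey k hk) _ h1
  · intro hcard
    have hcont := myaux_continuous n f hdelay
    have hmeas : Measurable f := hcont.measurable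
    have hkey : ∀ k, 2 ≤ k → ∀ y : ZMod (p ^ (n * (k - 1))),
        μ (f ⁻¹' ((PadicInt.toZModPow (n * (k - 1))) ⁻¹' {y}))
          = ((p : ENNReal) ^ (n * (k - 1)))⁻¹ := by
      intro k hk y
      haveI := hNZ (n * k)
      rw [hpreim k hk y, myaux_measure_preimage_eq μ (p ^ (n * k)) (PadicInt.toZModPow (n * k))
        (hfibmeas _) (((p : ENNReal) ^ (n * k))⁻¹) (fun y' => myaux_fiber_measure μ _ y') _,
        hcard k hk y, hmulkey k hk]
      have hc : ((p ^ n : ℕ) : ENNReal) = (p : ENNReal) ^ n := by push_cast; ring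
      rw [hc, myaux_mul_inv]
    refine ⟨hmeas, ?_⟩
    have hmapuniv : μ.map f Set.univ = 1 := by
      rw [Measure.map_apply hmeas MeasurableSet.univ, Set.preimage_univ, measure_univ]
    haveI : IsFiniteMeasure (μ.map f) := ⟨by rw [hmapuniv]; exact ENNReal.one_lt_top⟩
    refine ext_of_generate_finite _ myaux_generateFrom myaux_piSystem ?_
      (by rw [hmapuniv, measure_univ])
    rintro s ⟨m, y, rfl⟩
    rw [Measure.map_apply hmeas (hfibmeas m y)]
    haveI := hNZ (n * (m + 1))
    have hmm' : m ≤ n * (m + 1) :=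
      le_trans (Nat.le_succ m) (Nat.le_mul_of_pos_left (m + 1) (by omega))
    have hcomp := PadicInt.zmod_cast_comp_toZModPow (p := p) m (n * (m + 1)) hmm'
    have hfun : ⇑(PadicInt.toZModPow (p := p) m)
        = ⇑(ZMod.castHom (pow_dvd_pow p hmm') (ZMod (p ^ m)))
          ∘ ⇑(PadicInt.toZModPow (n * (m + 1))) := by
      rw [← hcomp]; rfl
    set S : Set (ZMod (p ^ (n * (m + 1)))) :=
      (ZMod.castHom (pow_dvd_pow p hmm') (ZMod (p ^ m))) ⁻¹' {y} with hS
    have hsplit : ((PadicInt.toZModPow m) ⁻¹' {y} : Set (PadicInt p))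
        = (PadicInt.toZModPow (n * (m + 1))) ⁻¹' S := by
      rw [hfun]; rfl
    have hLHS : μ (f ⁻¹' ((PadicInt.toZModPow m) ⁻¹' {y}))
        = (Nat.card S) * ((p : ENNReal) ^ (n * (m + 1)))⁻¹ := by
      rw [hsplit]
      have hco : f ⁻¹' ((PadicInt.toZModPow (n * (m + 1))) ⁻¹' S)
          = (⇑(PadicInt.toZModPow (n * (m + 1))) ∘ f) ⁻¹' S := rfl
      rw [hco]
      refine myaux_measure_preimage_eq μ _ _ (fun y' => hmeas (hfibmeas _ y')) _ ?_ S
      intro y'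
      exact hkey (m + 2) (by omega) y'
    have hRHS : μ ((PadicInt.toZModPow m) ⁻¹' {y})
        = (Nat.card S) * ((p : ENNReal) ^ (n * (m + 1)))⁻¹ := by
      rw [hsplit]
      exact myaux_measure_preimage_eq μ _ _ (hfibmeas _) _
        (fun y' => myaux_fiber_measure μ _ y') S
    rw [hLHS, hRHS]
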